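/- For the leaderless bearing formation system ṗ = −L p with Null(L) = span{1⊗I_d, r*} and r* orthogonal to 1⊗I_d, the final formation scale s(∞) = ‖p(∞) − 1⊗c(∞)‖ equals |(r*)^T p(0)|/‖r*‖ and satisfies 0 ≤ s(∞) ≤ s(0), where s(0) = ‖p(0) − 1⊗c(0)‖. -/

import Mathlib

open Matrix Filter

/-- The vector `1 ⊗ ê_a ∈ ℝ^{dn}`, indexed by (agent, coordinate). -/
def onesVec {n d : ℕ} (a : Fin d) : Fin n × Fin d → ℝ :=
  fun q => if q.2 = a then 1 else 0

/-- Centroid `c(p) = (1/n) Σᵢ pᵢ`. -/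
noncomputable def centroid {n d : ℕ} (p : Fin n × Fin d → ℝ) : Fin d → ℝ :=
  fun a => (n : ℝ)⁻¹ * ∑ i, p (i, a)

/-- Scale `s(p) = ‖p - 1 ⊗ c(p)‖` (Euclidean norm). -/
noncomputable def fscale {n d : ℕ} (p : Fin n × Fin d → ℝ) : ℝ :=
  Real.sqrt ((p - fun q => centroid p q.2) ⬝ᵥ (p - fun q => centroid p q.2))

section aux
variable {m : Type*} [Fintype m] [DecidableEq m]

lemma aux_deriv_lim_zero (f f' : ℝ → ℝ) (hf : ∀ t, HasDerivAt f (f' t) t)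
    (a c : ℝ) (ha : Tendsto f atTop (nhds a)) (hc : Tendsto f' atTop (nhds c)) : c = 0 := by
  have hmvt : ∀ t : ℝ, ∃ x ∈ Set.Ioo t (t+1), f' x = (f (t+1) - f t) / ((t+1) - t) := by
    intro t
    exact exists_hasDerivAt_eq_slope f f' (by linarith)
      (fun x _ => (hf x).continuousAt.continuousWithinAt) (fun x _ => hf x)
  choose ξ hξ hfξ using hmvt
  have hξtop : Tendsto ξ atTop atTop :=
    tendsto_atTop_mono (fun t => (hξ t).1.le) tendsto_id
  have h1 : Tendsto (fun t => f' (ξ t)) atTop (nhds c) := hc.comp hξtop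
  have h2 : Tendsto (fun t => f' (ξ t)) atTop (nhds 0) := by
    have heq : ∀ t, f' (ξ t) = f (t+1) - f t := by
      intro t; rw [hfξ t]; ring_nf
    simp_rw [heq]
    have := (ha.comp (tendsto_atTop_add_const_right atTop 1 tendsto_id)).sub ha
    simpa using this
  exact tendsto_nhds_unique h1 h2

omit [DecidableEq m] in
lemma aux_coord {p : ℝ → m → ℝ} {v : m → ℝ} {t : ℝ} (hp : HasDerivAt p v t) (i : m) :
    HasDerivAt (fun t => p t i) (v i) t :=
  ((ContinuousLinearMap.proj (R := ℝ) (φ := fun _ : m => ℝ) i).hasFDerivAt.comp_hasDerivAt t hp)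

omit [DecidableEq m] in
lemma aux_dot_deriv {p : ℝ → m → ℝ} {w : ℝ → m → ℝ} (hp : ∀ t, HasDerivAt p (w t) t)
    (v : m → ℝ) (t : ℝ) : HasDerivAt (fun t => v ⬝ᵥ p t) (v ⬝ᵥ w t) t := by
  simp only [dotProduct]
  exact HasDerivAt.fun_sum (fun i _ => (aux_coord (hp t) i).const_mul (v i))

lemma aux_conserved {L : Matrix m m ℝ} (hL : L.IsHermitian) {p : ℝ → m → ℝ}
    (hp : ∀ t, HasDerivAt p (-(L *ᵥ p t)) t) (v : m → ℝ) (hv : L *ᵥ v = 0) (t : ℝ) :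
    v ⬝ᵥ p t = v ⬝ᵥ p 0 := by
  have hderiv : ∀ s, HasDerivAt (fun s => v ⬝ᵥ p s) 0 s := by
    intro s
    have h := aux_dot_deriv hp v s
    have hz : v ⬝ᵥ (-(L *ᵥ p s)) = 0 := by
      rw [dotProduct_neg, dotProduct_mulVec, ← mulVec_transpose]
      have hLt : Lᵀ = L := by have h := hL.eq; rwa [Matrix.conjTranspose_eq_transpose_of_trivial] at h
      rw [hLt, hv, zero_dotProduct, neg_zero]
    rwa [hz] at h
  exact is_const_of_deriv_eq_zero (f := fun s => v ⬝ᵥ p s)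
    (fun s => (hderiv s).differentiableAt) (fun s => (hderiv s).deriv) t 0

omit [DecidableEq m] in
lemma aux_dot_cont (v : m → ℝ) : Continuous (fun x : m → ℝ => v ⬝ᵥ x) := by
  simp only [dotProduct]
  exact continuous_finset_sum _ fun i _ => continuous_const.mul (continuous_apply i)

omit [DecidableEq m] in
lemma aux_dot_cont' (v : m → ℝ) : Continuous (fun x : m → ℝ => x ⬝ᵥ v) := by
  simp only [dotProduct]
  exact continuous_finset_sum _ fun i _ => (continuous_apply i).mul continuous_const

omit [DecidableEq m] in
lemma aux_mulVec_cont (L : Matrix m m ℝ) : Continuous (fun x : m → ℝ => L *ᵥ x) :=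
  continuous_pi fun i => aux_dot_cont (L i)

-- limit of the trajectory is in the kernel
lemma aux_ker {L : Matrix m m ℝ} (hL : L.PosSemidef) {p : ℝ → m → ℝ}
    (hp : ∀ t, HasDerivAt p (-(L *ᵥ p t)) t) {q : m → ℝ}
    (hq : Tendsto p atTop (nhds q)) : L *ᵥ q = 0 := by
  set f : ℝ → ℝ := fun t => p t ⬝ᵥ p t with hf
  set f' : ℝ → ℝ := fun t => (-(L *ᵥ p t)) ⬝ᵥ p t + p t ⬝ᵥ (-(L *ᵥ p t)) with hf'
  have hder : ∀ t, HasDerivAt f (f' t) t := by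
    intro t
    have : HasDerivAt (fun t => ∑ i, p t i * p t i)
        (∑ i, ((-(L *ᵥ p t)) i * p t i + p t i * (-(L *ᵥ p t)) i)) t :=
      HasDerivAt.fun_sum (fun i _ => (aux_coord (hp t) i).mul (aux_coord (hp t) i))
    simpa [hf, hf', dotProduct, Finset.sum_add_distrib] using this
  have hfa : Tendsto f atTop (nhds (q ⬝ᵥ q)) := by
    have : Continuous (fun x : m → ℝ => x ⬝ᵥ x) := by
      simp only [dotProduct]
      exact continuous_finset_sum _ fun i _ => (continuous_apply i).mul (continuous_apply i)
    exact (this.tendsto q).comp hq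
  have hfc : Tendsto f' atTop (nhds ((-(L *ᵥ q)) ⬝ᵥ q + q ⬝ᵥ (-(L *ᵥ q)))) := by
    have hcont : Continuous (fun x : m → ℝ => (-(L *ᵥ x)) ⬝ᵥ x + x ⬝ᵥ (-(L *ᵥ x))) := by
      have h1 : Continuous (fun x : m → ℝ => -(L *ᵥ x)) := (aux_mulVec_cont L).neg
      have : Continuous (fun x : m → ℝ => ∑ i, (-(L *ᵥ x)) i * x i + ∑ i, x i * (-(L *ᵥ x)) i) := by
        refine Continuous.add ?_ ?_ <;>
          exact continuous_finset_sum _ fun i _ =>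
            Continuous.mul (by fun_prop) (by fun_prop)
      simpa [dotProduct] using this
    exact (hcont.tendsto q).comp hq
  have hc0 := aux_deriv_lim_zero f f' hder _ _ hfa hfc
  have hqLq : q ⬝ᵥ (L *ᵥ q) = 0 := by
    have h1 : (-(L *ᵥ q)) ⬝ᵥ q = -(q ⬝ᵥ (L *ᵥ q)) := by
      rw [neg_dotProduct, dotProduct_comm]
    have h2 : q ⬝ᵥ (-(L *ᵥ q)) = -(q ⬝ᵥ (L *ᵥ q)) := by rw [dotProduct_neg]
    rw [h1, h2] at hc0; linarith
  have := (hL.dotProduct_mulVec_zero_iff q).mp (by simpa using hqLq)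
  exact this

end aux

/-- For the leaderless bearing formation system `ṗ = -L p` with
`Null(L) = span{1⊗I_d, r*}`, `r* ⊥ 1⊗I_d`, the final scale satisfies
`s(∞) = |(r*)ᵀ p(0)| / ‖r*‖` and `0 ≤ s(∞) ≤ s(0)`. -/
theorem stmt15 {n d : ℕ} (hn : 2 ≤ n) (hd : 2 ≤ d)
    (L : Matrix (Fin n × Fin d) (Fin n × Fin d) ℝ) (hL : L.PosSemidef)
    (rstar : Fin n × Fin d → ℝ) (hr0 : rstar ≠ 0)
    (horth : ∀ a : Fin d, (onesVec (n := n) a) ⬝ᵥ rstar = 0)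
    (hnull : ∀ z, L *ᵥ z = 0 ↔
      z ∈ Submodule.span ℝ ({rstar} ∪ Set.range (onesVec (n := n) (d := d))))
    (p : ℝ → Fin n × Fin d → ℝ)
    (hp : ∀ t, HasDerivAt p (-(L *ᵥ p t)) t)
    (q : Fin n × Fin d → ℝ) (hq : Tendsto p atTop (nhds q)) :
    fscale q = |rstar ⬝ᵥ p 0| / Real.sqrt (rstar ⬝ᵥ rstar) ∧
    0 ≤ fscale q ∧ fscale q ≤ fscale (p 0) := by
  have hnne : (n : ℝ) ≠ 0 := by positivity
  -- column sums of rstar vanish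
  have hsum : ∀ a : Fin d, ∑ i, rstar (i, a) = 0 := by
    intro a
    have h := horth a
    simpa [onesVec, dotProduct, Fintype.sum_prod_type, Finset.sum_ite_eq', ite_mul] using h
  -- kernel facts
  have hLr : L *ᵥ rstar = 0 :=
    (hnull rstar).mpr (Submodule.subset_span (Or.inl rfl))
  -- q is in the kernel
  have hLq : L *ᵥ q = 0 := aux_ker hL hp hq
  -- rstar ⬝ᵥ q = rstar ⬝ᵥ p 0
  have hrq : rstar ⬝ᵥ q = rstar ⬝ᵥ p 0 := by
    have h1 : Tendsto (fun t => rstar ⬝ᵥ p t) atTop (nhds (rstar ⬝ᵥ q)) :=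
      ((aux_dot_cont rstar).tendsto q).comp hq
    have h2 : (fun t => rstar ⬝ᵥ p t) = fun _ => rstar ⬝ᵥ p 0 :=
      funext (aux_conserved hL.1 hp rstar hLr)
    rw [h2] at h1
    exact tendsto_nhds_unique h1 tendsto_const_nhds
  -- decompose q
  obtain ⟨α, β, hqeq⟩ : ∃ (α : ℝ) (β : Fin d → ℝ),
      q = α • rstar + fun x => β x.2 := by
    have hmem := (hnull q).mp hLq
    rw [Submodule.span_union, Submodule.mem_sup] at hmem
    obtain ⟨y, hy, z, hz, hyz⟩ := hmem
    rw [Submodule.mem_span_singleton] at hy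
    obtain ⟨α, rfl⟩ := hy
    rw [Submodule.mem_span_range_iff_exists_fun] at hz
    obtain ⟨β, rfl⟩ := hz
    refine ⟨α, β, ?_⟩
    rw [← hyz]
    funext x
    simp [onesVec, Finset.sum_ite_eq', mul_comm]
  -- centroid of q
  have hcent : ∀ a, centroid q a = β a := by
    intro a
    simp only [centroid, hqeq]
    have : ∑ i : Fin n, (α * rstar (i, a) + β a) = α * (∑ i, rstar (i, a)) + n * β a := by
      rw [Finset.sum_add_distrib, ← Finset.mul_sum]
      simp [Finset.card_univ]
    simp only [Pi.add_apply, Pi.smul_apply, smul_eq_mul]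
    rw [this, hsum a, mul_zero, zero_add]
    field_simp
  -- normalized q
  have hnorm : (q - fun x => centroid q x.2) = α • rstar := by
    funext x
    have h1 : (q - fun y : Fin n × Fin d => centroid q y.2) x = q x - centroid q x.2 := rfl
    rw [h1, hcent x.2, hqeq]
    simp
  -- rstar ⬝ᵥ q = α * (rstar ⬝ᵥ rstar)
  have hrq2 : rstar ⬝ᵥ q = α * (rstar ⬝ᵥ rstar) := by
    rw [hqeq, dotProduct_add, dotProduct_smul]
    have : rstar ⬝ᵥ (fun x => β x.2) = 0 := by
      simp only [dotProduct, Fintype.sum_prod_type]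
      rw [Finset.sum_comm]
      have : ∀ a : Fin d, ∑ i : Fin n, rstar (i, a) * β a = 0 := by
        intro a; rw [← Finset.sum_mul, hsum a, zero_mul]
      simp [this]
    rw [this, add_zero, smul_eq_mul]
  have hnn : 0 ≤ rstar ⬝ᵥ rstar := by
    simp only [dotProduct]
    exact Finset.sum_nonneg fun i _ => mul_self_nonneg _
  have hrr_pos : 0 < rstar ⬝ᵥ rstar := by
    rcases lt_or_eq_of_le hnn with h | h
    · exact h
    · exact absurd (dotProduct_self_eq_zero.mp h.symm) hr0
  have hsqrt_pos : 0 < Real.sqrt (rstar ⬝ᵥ rstar) := Real.sqrt_pos.mpr hrr_pos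
  -- compute fscale q
  have hfq : fscale q = |α| * Real.sqrt (rstar ⬝ᵥ rstar) := by
    rw [fscale, hnorm]
    have : (α • rstar) ⬝ᵥ (α • rstar) = α ^ 2 * (rstar ⬝ᵥ rstar) := by
      rw [smul_dotProduct, dotProduct_smul, smul_eq_mul, smul_eq_mul]; ring
    rw [this, Real.sqrt_mul (sq_nonneg α), Real.sqrt_sq_eq_abs]
  have halpha : α = (rstar ⬝ᵥ p 0) / (rstar ⬝ᵥ rstar) := by
    field_simp
    rw [← hrq2, hrq]
  have hmain : fscale q = |rstar ⬝ᵥ p 0| / Real.sqrt (rstar ⬝ᵥ rstar) := by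
    rw [hfq, halpha, abs_div, abs_of_pos hrr_pos]
    rw [div_mul_eq_mul_div, div_eq_div_iff hrr_pos.ne' hsqrt_pos.ne']
    rw [mul_assoc, Real.mul_self_sqrt hrr_pos.le]
  refine ⟨hmain, Real.sqrt_nonneg _, ?_⟩
  -- Cauchy–Schwarz bound
  set x0 : Fin n × Fin d → ℝ := p 0 - fun x => centroid (p 0) x.2 with hx0
  have hrx0 : rstar ⬝ᵥ x0 = rstar ⬝ᵥ p 0 := by
    rw [hx0, dotProduct_sub]
    have : rstar ⬝ᵥ (fun x => centroid (p 0) x.2) = 0 := by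
      simp only [dotProduct, Fintype.sum_prod_type]
      rw [Finset.sum_comm]
      have : ∀ a : Fin d, ∑ i : Fin n, rstar (i, a) * centroid (p 0) a = 0 := by
        intro a; rw [← Finset.sum_mul, hsum a, zero_mul]
      simp [this]
    rw [this, sub_zero]
  have hCS : |rstar ⬝ᵥ p 0| ≤ Real.sqrt (rstar ⬝ᵥ rstar) * Real.sqrt (x0 ⬝ᵥ x0) := by
    rw [← hrx0]
    have h1 : (rstar ⬝ᵥ x0) ^ 2 ≤ (rstar ⬝ᵥ rstar) * (x0 ⬝ᵥ x0) := by
      have := Finset.sum_mul_sq_le_sq_mul_sq Finset.univ rstar x0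
      simpa [dotProduct, pow_two, Finset.mul_sum, mul_comm, mul_assoc, mul_left_comm] using this
    calc |rstar ⬝ᵥ x0| = Real.sqrt ((rstar ⬝ᵥ x0) ^ 2) := (Real.sqrt_sq_eq_abs _).symm
      _ ≤ Real.sqrt ((rstar ⬝ᵥ rstar) * (x0 ⬝ᵥ x0)) := Real.sqrt_le_sqrt h1
      _ = Real.sqrt (rstar ⬝ᵥ rstar) * Real.sqrt (x0 ⬝ᵥ x0) :=
          Real.sqrt_mul hrr_pos.le _
  rw [hmain, div_le_iff₀ hsqrt_pos]
  rw [fscale]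
  calc |rstar ⬝ᵥ p 0| ≤ Real.sqrt (rstar ⬝ᵥ rstar) * Real.sqrt (x0 ⬝ᵥ x0) := hCS
    _ = Real.sqrt (x0 ⬝ᵥ x0) * Real.sqrt (rstar ⬝ᵥ rstar) := mul_comm _ _
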